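/- Define E_{2n,q} := (-1)^n [2n]_q! \Delta_{n,q}. Then \sum_{n \ge 0} E_{2n,q} t^{2n}/(q;q)_{2n} = sech_q(t) as formal power series over Q(q), i.e., (\sum_{n\ge0} E_{2n,q} t^{2n}/(q;q)_{2n}) \cdot cosh_q(t) = 1. -/

import Mathlib

/-- The `q`-integer `[m]_q = 1 + q + ⋯ + q^{m-1}`. -/
noncomputable def qInt {K : Type*} [Field K] (q : K) (m : ℕ) : K :=
  ∑ i ∈ Finset.range m, q ^ i

/-- The `q`-factorial `[m]_q! = [1]_q [2]_q ⋯ [m]_q`. -/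
noncomputable def qFact {K : Type*} [Field K] (q : K) : ℕ → K
  | 0 => 1
  | m + 1 => qFact q m * qInt q (m + 1)

/-- The `q`-Pochhammer symbol `(q;q)_m = (1-q)(1-q²)⋯(1-q^m)`. -/
noncomputable def qPoch {K : Type*} [Field K] (q : K) (m : ℕ) : K :=
  ∏ i ∈ Finset.range m, (1 - q ^ (i + 1))

/-- Determinant of the `n × n` lower Hessenberg matrix with `(i,j)` entry `1` if `j = i+1`,
`0` if `j > i+1`, and `f (i-j)` if `j ≤ i`. -/
noncomputable def hessDet {K : Type*} [Field K] (f : ℕ → K) (n : ℕ) : K :=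
  Matrix.det (Matrix.of fun i j : Fin n =>
    if (j : ℕ) = (i : ℕ) + 1 then 1
    else if (i : ℕ) + 1 < (j : ℕ) then 0
    else f ((i : ℕ) - (j : ℕ)))

/-- `Δ_{n,q}` in `ℚ(q)` with `q = X`. -/
noncomputable def DeltaQ (n : ℕ) : RatFunc ℚ :=
  hessDet (fun k => (qFact (RatFunc.X : RatFunc ℚ) (2 * k + 2))⁻¹) n

/-- `E_{2n,q} := (-1)^n [2n]_q! Δ_{n,q}`. -/
noncomputable def Esec (n : ℕ) : RatFunc ℚ :=
  (-1) ^ n * qFact (RatFunc.X : RatFunc ℚ) (2 * n) * DeltaQ n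

/-- `cosh_q(t) = ∑ t^{2n}/(q;q)_{2n}` in `ℚ(q)[[t]]`. -/
noncomputable def coshQ : PowerSeries (RatFunc ℚ) :=
  PowerSeries.mk fun m => if m % 2 = 0 then (qPoch (RatFunc.X : RatFunc ℚ) m)⁻¹ else 0

/- ### Auxiliary material -/

noncomputable def hessMat {K : Type*} [Field K] (f : ℕ → K) (n : ℕ) : Matrix (Fin n) (Fin n) K :=
  Matrix.of fun i j : Fin n =>
    if (j : ℕ) = (i : ℕ) + 1 then 1
    else if (i : ℕ) + 1 < (j : ℕ) then 0
    else f ((i : ℕ) - (j : ℕ))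

lemma hessDet_eq {K : Type*} [Field K] (f : ℕ → K) (n : ℕ) :
    hessDet f n = (hessMat f n).det := rfl

lemma hessMat_shift {K : Type*} [Field K] (f : ℕ → K) (n : ℕ) (r c : Fin n) :
    hessMat f (n+1) r.succ c.succ = hessMat f n r c := by
  simp only [hessMat, Matrix.of_apply, Fin.val_succ]
  have h1 : ((c : ℕ) + 1 = (r : ℕ) + 1 + 1) ↔ ((c : ℕ) = (r : ℕ) + 1) := by omega
  have h2 : ((r : ℕ) + 1 + 1 < (c : ℕ) + 1) ↔ ((r : ℕ) + 1 < (c : ℕ)) := by omega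
  have h3 : (r : ℕ) + 1 - ((c : ℕ) + 1) = (r : ℕ) - (c : ℕ) := by omega
  simp [h1, h2, h3]

lemma minor_det {K : Type*} [Field K] (f : ℕ → K) :
    ∀ (n : ℕ) (i : Fin (n+1)),
      ((hessMat f (n+1)).submatrix i.succAbove Fin.succ).det = hessDet f (n - (i : ℕ)) := by
  intro n
  induction n with
  | zero =>
    intro i
    fin_cases i
    simp [hessDet]
  | succ m ih =>
    intro i
    induction i using Fin.cases with
    | zero =>
      have hM : (hessMat f (m+2)).submatrix (Fin.succAbove 0) Fin.succ = hessMat f (m+1) := by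
        ext r c
        rw [Matrix.submatrix_apply, Fin.zero_succAbove, hessMat_shift]
      rw [hM, hessDet_eq]
      simp
      rfl
    | succ j =>
      set N := (hessMat f (m+2)).submatrix (Fin.succAbove j.succ) Fin.succ with hN
      have hrow : ∀ c : Fin (m+1), N 0 c = if c = 0 then 1 else 0 := by
        intro c
        have h0 : j.succ.succAbove 0 = 0 := by
          rw [Fin.succAbove_of_castSucc_lt]
          · rfl
          · simp [Fin.castSucc_zero, Fin.succ_pos]
        rw [hN, Matrix.submatrix_apply, h0]
        simp only [hessMat, Matrix.of_apply, Fin.val_succ, Fin.val_zero]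
        rcases eq_or_ne c 0 with hc | hc
        · subst hc; simp
        · have hc' : 1 ≤ (c : ℕ) := Fin.pos_of_ne_zero hc
          have h1 : ¬ ((c:ℕ) + 1 = 0 + 1) := by omega
          have h2 : 0 + 1 < (c:ℕ) + 1 := by omega
          simp only [h1, h2, hc, if_false, if_true]
      rw [Matrix.det_succ_row_zero]
      rw [Fintype.sum_eq_single (0 : Fin (m+1)) ?side]
      case side =>
        intro c hc
        rw [hrow c, if_neg hc]
        ring
      rw [hrow 0, if_pos rfl, Fin.val_zero, pow_zero, one_mul, one_mul]
      have hsub : N.submatrix Fin.succ (Fin.succAbove 0)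
          = (hessMat f (m+1)).submatrix j.succAbove Fin.succ := by
        ext r c
        rw [Matrix.submatrix_apply, Fin.zero_succAbove, hN, Matrix.submatrix_apply,
          Matrix.submatrix_apply, Fin.succ_succAbove_succ, hessMat_shift]
      rw [hsub, ih j]
      congr 1
      rw [Fin.val_succ]
      omega

lemma hessDet_rec {K : Type*} [Field K] (f : ℕ → K) (n : ℕ) :
    hessDet f (n+1) = ∑ i ∈ Finset.range (n+1), (-1 : K)^i * f i * hessDet f (n - i) := by
  rw [hessDet_eq, Matrix.det_succ_column_zero]
  rw [← Fin.sum_univ_eq_sum_range (fun i => (-1 : K)^i * f i * hessDet f (n - i))]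
  refine Finset.sum_congr rfl fun i _ => ?_
  rw [minor_det]
  have hA : hessMat f (n+1) i 0 = f i := by
    simp only [hessMat, Matrix.of_apply, Fin.val_zero]
    have h1 : ¬ (0 = (i:ℕ) + 1) := by omega
    have h2 : ¬ ((i:ℕ) + 1 < 0) := by omega
    simp only [h1, h2, if_false, Nat.sub_zero]
  rw [hA]

local notation "XX" => (RatFunc.X : RatFunc ℚ)

lemma X_pow_ne_one (m : ℕ) (hm : 1 ≤ m) : (XX) ^ m ≠ 1 := by
  intro h
  have : (Polynomial.X : Polynomial ℚ) ^ m = 1 := by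
    apply RatFunc.algebraMap_injective ℚ
    rw [map_pow, map_one]
    exact h
  have := congrArg Polynomial.natDegree this
  simp [Polynomial.natDegree_X_pow] at this
  omega

lemma one_sub_X_pow_ne (m : ℕ) (hm : 1 ≤ m) : (1 : RatFunc ℚ) - XX ^ m ≠ 0 := by
  intro h
  exact X_pow_ne_one m hm (by linear_combination -h)

lemma qInt_mul (m : ℕ) : qInt XX m * (1 - XX) = 1 - XX ^ m := by
  have := geom_sum_mul (XX) m
  unfold qInt
  linear_combination -this

lemma one_sub_X_ne : (1 : RatFunc ℚ) - XX ≠ 0 := by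
  have := one_sub_X_pow_ne 1 le_rfl
  simpa using this

lemma qInt_ne_zero (m : ℕ) (hm : 1 ≤ m) : qInt XX m ≠ 0 := by
  intro h
  have := qInt_mul m
  rw [h, zero_mul] at this
  exact one_sub_X_pow_ne m hm this.symm

lemma qFact_ne_zero (m : ℕ) : qFact XX m ≠ 0 := by
  induction m with
  | zero => simp [qFact]
  | succ k ih =>
    unfold qFact
    exact mul_ne_zero ih (qInt_ne_zero (k+1) (by omega))

lemma qPoch_eq (m : ℕ) : qPoch XX m = qFact XX m * (1 - XX) ^ m := by
  induction m with
  | zero => simp [qPoch, qFact]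
  | succ k ih =>
    unfold qPoch at ih ⊢
    rw [Finset.prod_range_succ, ih]
    show _ = qFact XX k * qInt XX (k+1) * (1 - XX)^(k+1)
    rw [pow_succ]
    have := qInt_mul (k+1)
    linear_combination -(qFact XX k * (1-XX)^k) * this

lemma qPoch_ne_zero (m : ℕ) : qPoch XX m ≠ 0 := by
  rw [qPoch_eq]
  exact mul_ne_zero (qFact_ne_zero m) (pow_ne_zero _ one_sub_X_ne)

lemma DeltaQ_zero : DeltaQ 0 = 1 := by
  simp [DeltaQ, hessDet]

lemma DeltaQ_rec (n : ℕ) :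
    DeltaQ (n+1) = ∑ i ∈ Finset.range (n+1),
      (-1 : RatFunc ℚ)^i * (qFact XX (2*i+2))⁻¹ * DeltaQ (n - i) := by
  unfold DeltaQ
  exact hessDet_rec _ n

lemma key (M : ℕ) :
    ∑ k ∈ Finset.range (M+2),
      (-1 : RatFunc ℚ)^k * DeltaQ k * (qFact XX (2*(M+1-k)))⁻¹ = 0 := by
  rw [Finset.sum_range_succ]
  have hlast : 2*(M+1-(M+1)) = 0 := by omega
  rw [hlast]
  have hrefl : ∑ k ∈ Finset.range (M+1),
      (-1 : RatFunc ℚ)^(M-k) * (qFact XX (2*(M-k)+2))⁻¹ * DeltaQ (M-(M-k))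
      = DeltaQ (M+1) := by
    rw [DeltaQ_rec]
    have := Finset.sum_range_reflect
      (fun i => (-1 : RatFunc ℚ)^i * (qFact XX (2*i+2))⁻¹ * DeltaQ (M-i)) (M+1)
    simpa using this
  have hterm : ∀ k ∈ Finset.range (M+1),
      (-1 : RatFunc ℚ)^k * DeltaQ k * (qFact XX (2*(M+1-k)))⁻¹
      = -((-1 : RatFunc ℚ)^(M+1) *
          ((-1 : RatFunc ℚ)^(M-k) * (qFact XX (2*(M-k)+2))⁻¹ * DeltaQ (M-(M-k)))) := by
    intro k hk
    have hkM : k ≤ M := by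
      have := Finset.mem_range.mp hk; omega
    rw [Nat.sub_sub_self hkM]
    have h2 : 2*(M-k)+2 = 2*(M+1-k) := by omega
    rw [h2]
    have hsign : (-1 : RatFunc ℚ)^(M+1) * (-1 : RatFunc ℚ)^(M-k) = -(-1 : RatFunc ℚ)^k := by
      rw [← pow_add]
      have he : (M+1)+(M-k) = 2*(M-k) + (k+1) := by omega
      rw [he, pow_add, pow_mul]
      simp [pow_succ]
    linear_combination (DeltaQ k * (qFact XX (2*(M+1-k)))⁻¹) * hsign
  rw [Finset.sum_congr rfl hterm, Finset.sum_neg_distrib, ← Finset.mul_sum, hrefl]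
  have h0 : qFact XX 0 = 1 := rfl
  rw [h0]
  ring

lemma sum_even {A : Type*} [AddCommMonoid A] (g : ℕ → A) (h : ∀ k, k % 2 = 1 → g k = 0)
    (N : ℕ) : ∑ k ∈ Finset.range (2*N+1), g k = ∑ k ∈ Finset.range (N+1), g (2*k) := by
  induction N with
  | zero => simp
  | succ n ih =>
    have h1 : 2*(n+1)+1 = (2*n+1)+1+1 := by omega
    rw [h1, Finset.sum_range_succ, Finset.sum_range_succ, ih, h (2*n+1) (by omega),
      add_zero]
    have h2 : 2*n+1+1 = 2*(n+1) := by omega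
    rw [h2]
    exact (Finset.sum_range_succ _ (n+1)).symm

/-- `∑_{n≥0} E_{2n,q} t^{2n}/(q;q)_{2n} = sech_q(t)`, i.e. the left-hand series times
`cosh_q(t)` equals `1`, as formal power series over `ℚ(q)`. -/
theorem stmt5 :
    (PowerSeries.mk fun m =>
        if m % 2 = 0 then Esec (m / 2) / qPoch (RatFunc.X : RatFunc ℚ) m else 0) * coshQ
      = 1 := by
  refine PowerSeries.ext fun n => ?_
  rw [PowerSeries.coeff_mul, Finset.Nat.sum_antidiagonal_eq_sum_range_succ_mk]
  simp only [coshQ, PowerSeries.coeff_mk, PowerSeries.coeff_one]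
  rcases Nat.even_or_odd n with he | ho
  · obtain ⟨N, hN⟩ := he
    rcases Nat.eq_zero_or_pos N with h0 | hpos
    · subst h0
      simp only [Nat.add_eq, Nat.zero_add] at hN
      subst hN
      simp only [Finset.range_one, Finset.sum_singleton, Nat.zero_mod, if_pos rfl,
        Nat.zero_div, Nat.sub_zero]
      have hp : qPoch XX 0 = 1 := by simp [qPoch]
      have hE : Esec 0 = 1 := by simp [Esec, qFact, DeltaQ_zero]
      rw [hp, hE]
      simp
    · have hn : n = 2*N := by omega
      subst hn
      have hne : ¬ (2*N = 0) := by omega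
      rw [if_neg hne]
      have heven : ∀ k, k % 2 = 1 →
          (if k % 2 = 0 then Esec (k / 2) / qPoch XX k else 0) *
            (if (2*N - k) % 2 = 0 then (qPoch XX (2*N - k))⁻¹ else 0) = 0 := by
        intro k hk
        rw [if_neg (by omega)]
        ring
      rw [Nat.succ_eq_add_one, sum_even _ heven N]
      have hterm : ∀ k ∈ Finset.range (N+1),
          (if (2*k) % 2 = 0 then Esec ((2*k) / 2) / qPoch XX (2*k) else 0) *
            (if (2*N - 2*k) % 2 = 0 then (qPoch XX (2*N - 2*k))⁻¹ else 0)
          = ((1-XX)^(2*N))⁻¹ *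
              ((-1 : RatFunc ℚ)^k * DeltaQ k * (qFact XX (2*(N-k)))⁻¹) := by
        intro k hk
        have hkN : k ≤ N := by
          have := Finset.mem_range.mp hk; omega
        obtain ⟨a, ha⟩ : ∃ a, N = k + a := ⟨N - k, by omega⟩
        subst ha
        have e1 : 2*(k+a) - 2*k = 2*a := by omega
        have e2 : 2*(k+a-k) = 2*a := by omega
        rw [e1, e2, if_pos (by omega), if_pos (by omega), Nat.mul_div_cancel_left _ (by norm_num)]
        rw [Esec, qPoch_eq, qPoch_eq]
        have e3 : 2*(k+a) = 2*k + 2*a := by omega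
        rw [e3, pow_add]
        have hf1 := qFact_ne_zero (2*k)
        have hf2 := qFact_ne_zero (2*a)
        have hx := one_sub_X_ne
        have hxk : ((1:RatFunc ℚ)-XX)^(2*k) ≠ 0 := pow_ne_zero _ hx
        have hxa : ((1:RatFunc ℚ)-XX)^(2*a) ≠ 0 := pow_ne_zero _ hx
        field_simp
      rw [Finset.sum_congr rfl hterm, ← Finset.mul_sum]
      obtain ⟨M, hM⟩ : ∃ M, N = M + 1 := ⟨N - 1, by omega⟩
      subst hM
      rw [key M]
      ring
  · obtain ⟨N, hN⟩ := ho
    have hne : ¬ (n = 0) := by omega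
    rw [if_neg hne]
    refine Finset.sum_eq_zero fun k hk => ?_
    have hkn : k ≤ n := by
      have := Finset.mem_range.mp hk; omega
    rcases Nat.even_or_odd k with hke | hko
    · have hk2 : k % 2 = 0 := Nat.even_iff.mp hke
      have hnk : (n - k) % 2 = 1 := by omega
      rw [if_pos hk2, if_neg (by omega)]
      ring
    · have hk2 : k % 2 = 1 := Nat.odd_iff.mp hko
      rw [if_neg (by omega)]
      ring
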